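/- arXiv:quant-ph/0605213 — 2 statements merged into one kernel-verified Lean document; each statement's English description precedes it below -/
import Mathlib

section
/- (Impossibility of perfect distinguishability on both systems.) Let H_S and H_A be finite-dimensional complex Hilbert spaces, L_S a self-adjoint operator on H_S, L_A a self-adjoint operator on H_A, and let U be a unitary operator on H_S ⊗ H_A commuting with L_S ⊗ 1 + 1 ⊗ L_A. Let ψ0, ψ1 ∈ H_S be orthogonal unit vectors with ⟨ψ0, L_S ψ1⟩ ≠ 0, let σ be a density matrix on H_A, and ρ_i := U (|ψ_i⟩⟨ψ_i| ⊗ σ) U* for i = 0, 1. Then it is not the case that both F(ρ0^S, ρ1^S) = 0 and F(ρ0^A, ρ1^A) = 0, where ρ_i^S, ρ_i^A are the reduced density matrices of ρ_i on H_S and H_A and F is the fidelity. -/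
open Matrix Kronecker
open scoped ComplexOrder

-- Positive semidefinite square root (zero if not PSD).
open Classical in
noncomputable def psqrt {n : Type*} [Fintype n] [DecidableEq n] (A : Matrix n n ℂ) :
    Matrix n n ℂ :=
  if h : A.PosSemidef then
    (h.1.eigenvectorUnitary : Matrix n n ℂ) * diagonal ((↑) ∘ Real.sqrt ∘ h.1.eigenvalues) *
      (star h.1.eigenvectorUnitary : Matrix n n ℂ)
  else 0

/-- Fidelity F(ρ0,ρ1) = tr √(√ρ0 ρ1 √ρ0). -/
noncomputable def fidelity {n : Type*} [Fintype n] [DecidableEq n] (ρ0 ρ1 : Matrix n n ℂ) : ℝ :=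
  (psqrt (psqrt ρ0 * ρ1 * psqrt ρ0)).trace.re

/-- Operator (ℓ²→ℓ²) norm of a matrix. -/
noncomputable def opNorm {n : Type*} [Fintype n] [DecidableEq n] (A : Matrix n n ℂ) : ℝ :=
  ‖LinearMap.toContinuousLinearMap (Matrix.toEuclideanLin A)‖

/-- Partial trace over the right (second) factor. -/
noncomputable def ptraceRight {m n : Type*} [Fintype m] [Fintype n]
    (ρ : Matrix (m × n) (m × n) ℂ) : Matrix m m ℂ :=
  Matrix.of fun i j => ∑ k, ρ (i, k) (j, k)

/-- Partial trace over the left (first) factor. -/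
noncomputable def ptraceLeft {m n : Type*} [Fintype m] [Fintype n]
    (ρ : Matrix (m × n) (m × n) ℂ) : Matrix n n ℂ :=
  Matrix.of fun i j => ∑ k, ρ (k, i) (k, j)



open Matrix Kronecker
open scoped ComplexOrder

namespace Matrix.PosSemidef

/-- PSD square root via the spectral decomposition. -/
noncomputable def sqrt {n : Type*} [Fintype n] [DecidableEq n] {A : Matrix n n ℂ}
    (h : A.PosSemidef) : Matrix n n ℂ :=
  (h.1.eigenvectorUnitary : Matrix n n ℂ) * diagonal ((↑) ∘ Real.sqrt ∘ h.1.eigenvalues) *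
    (star h.1.eigenvectorUnitary : Matrix n n ℂ)

lemma posSemidef_sqrt {n : Type*} [Fintype n] [DecidableEq n] {A : Matrix n n ℂ}
    (h : A.PosSemidef) : h.sqrt.PosSemidef := by
  have hd : (diagonal ((↑) ∘ Real.sqrt ∘ h.1.eigenvalues) : Matrix n n ℂ).PosSemidef :=
    PosSemidef.diagonal fun i => by
      simp only [Pi.zero_apply, Function.comp_apply]
      exact Complex.zero_le_real.mpr (Real.sqrt_nonneg _)
  have := hd.mul_mul_conjTranspose_same (h.1.eigenvectorUnitary : Matrix n n ℂ)
  rwa [← star_eq_conjTranspose, ← Unitary.coe_star] at this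

lemma sqrt_mul_self {n : Type*} [Fintype n] [DecidableEq n] {A : Matrix n n ℂ}
    (h : A.PosSemidef) : h.sqrt * h.sqrt = A := by
  have hU := Unitary.coe_star_mul_self h.1.eigenvectorUnitary
  have e : h.sqrt * h.sqrt = (h.1.eigenvectorUnitary : Matrix n n ℂ) *
      (diagonal ((↑) ∘ Real.sqrt ∘ h.1.eigenvalues) *
        ((star h.1.eigenvectorUnitary : Matrix n n ℂ) * (h.1.eigenvectorUnitary : Matrix n n ℂ)) *
        diagonal ((↑) ∘ Real.sqrt ∘ h.1.eigenvalues)) *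
      (star h.1.eigenvectorUnitary : Matrix n n ℂ) := by
    simp only [sqrt, Matrix.mul_assoc]
  rw [e, hU, Matrix.mul_one, diagonal_mul_diagonal]
  conv_rhs => rw [h.1.spectral_theorem, Unitary.conjStarAlgAut_apply]
  congr 2
  refine congrArg diagonal (funext fun i => ?_)
  simp only [Function.comp_apply]
  rw [← Complex.ofReal_mul, Real.mul_self_sqrt (h.eigenvalues_nonneg i)]
  rfl

end Matrix.PosSemidef

section AuxLemmas

variable {m n p q : Type*} [Fintype m] [Fintype n] [Fintype p] [Fintype q]

/-- A matrix with `(Cᴴ*C).trace.re = 0` is zero. -/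
lemma aux_eq_zero_of_trace_re (C : Matrix p q ℂ) (h : (Cᴴ * C).trace.re = 0) : C = 0 := by
  have htr : (Cᴴ * C).trace.re = ∑ j, ∑ i, Complex.normSq (C i j) := by
    simp only [Matrix.trace, Matrix.diag, Matrix.mul_apply, Matrix.conjTranspose_apply,
      Complex.re_sum]
    refine Finset.sum_congr rfl fun j _ => Finset.sum_congr rfl fun i _ => ?_
    simp only [Complex.normSq_apply, Complex.mul_re, Complex.star_def, Complex.conj_re,
      Complex.conj_im]
    ring
  rw [htr] at h
  have h2 : ∀ j ∈ Finset.univ, (∑ i, Complex.normSq (C i j)) = 0 := by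
    intro j _
    have := (Finset.sum_eq_zero_iff_of_nonneg (fun j _ =>
      Finset.sum_nonneg fun i _ => Complex.normSq_nonneg (C i j))).mp h
    exact this j (Finset.mem_univ j)
  ext i j
  have h3 := (Finset.sum_eq_zero_iff_of_nonneg (fun i _ => Complex.normSq_nonneg (C i j))).mp
    (h2 j (Finset.mem_univ j)) i (Finset.mem_univ i)
  simpa using Complex.normSq_eq_zero.mp h3

/-- PSD matrix with zero real trace is zero. -/
lemma aux_psd_trace_re_zero {N : Matrix p p ℂ} [DecidableEq p] (hN : N.PosSemidef)
    (h : N.trace.re = 0) : N = 0 := by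
  have hr : hN.sqrtᴴ * hN.sqrt = N := by
    rw [hN.posSemidef_sqrt.isHermitian.eq, hN.sqrt_mul_self]
  have h0 : hN.sqrt = 0 := aux_eq_zero_of_trace_re _ (by rw [hr]; exact h)
  rw [← hN.sqrt_mul_self, h0, mul_zero]

/-- Fidelity zero for PSD matrices implies product zero. -/
lemma aux_fid_zero {k : Type*} [Fintype k] [DecidableEq k] {α β : Matrix k k ℂ}
    (hα : α.PosSemidef) (hβ : β.PosSemidef) (h : fidelity α β = 0) : α * β = 0 := by
  have hpα : psqrt α = hα.sqrt := dif_pos hα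
  have hsH : hα.sqrtᴴ = hα.sqrt := hα.posSemidef_sqrt.isHermitian.eq
  have hM : (hα.sqrt * β * hα.sqrt).PosSemidef := by
    have := hβ.conjTranspose_mul_mul_same hα.sqrt
    rwa [hsH] at this
  have hpM : psqrt (hα.sqrt * β * hα.sqrt) = hM.sqrt := dif_pos hM
  rw [fidelity, hpα, hpM] at h
  have h0 : hα.sqrt * β * hα.sqrt = 0 := by
    rw [← hM.sqrt_mul_self, aux_psd_trace_re_zero hM.posSemidef_sqrt h, mul_zero]
  -- β = b * b with b := hβ.sqrt
  have hbH : hβ.sqrtᴴ = hβ.sqrt := hβ.posSemidef_sqrt.isHermitian.eq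
  have h1 : (hβ.sqrt * hα.sqrt)ᴴ * (hβ.sqrt * hα.sqrt) = 0 := by
    rw [conjTranspose_mul, hbH, hsH]
    calc hα.sqrt * hβ.sqrt * (hβ.sqrt * hα.sqrt)
        = hα.sqrt * (hβ.sqrt * hβ.sqrt) * hα.sqrt := by simp only [Matrix.mul_assoc]
      _ = hα.sqrt * β * hα.sqrt := by rw [hβ.sqrt_mul_self]
      _ = 0 := h0
  have h2 : hβ.sqrt * hα.sqrt = 0 := conjTranspose_mul_self_eq_zero.mp h1
  have h3 : β * α = 0 := by
    have e1 : β * α = hβ.sqrt * ((hβ.sqrt * hα.sqrt) * hα.sqrt) := by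
      conv_lhs => rw [← hβ.sqrt_mul_self, ← hα.sqrt_mul_self]
      simp only [Matrix.mul_assoc]
    rw [e1, h2, Matrix.zero_mul, Matrix.mul_zero]
  calc α * β = (β * α)ᴴ := by rw [conjTranspose_mul, hα.isHermitian.eq, hβ.isHermitian.eq]
    _ = 0 := by rw [h3]; simp

end AuxLemmas
section Reshape

variable {m n p : Type*} [Fintype m] [Fintype n] [Fintype p]

/-- Reshape `(m×n) × p` matrix to `m × (n×p)`. -/
def reshR (V : Matrix (m × n) p ℂ) : Matrix m (n × p) ℂ :=
  Matrix.of fun j kl => V (j, kl.1) kl.2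

/-- Reshape `(m×n) × p` matrix to `(m×p) × n`. -/
def reshL (V : Matrix (m × n) p ℂ) : Matrix (m × p) n ℂ :=
  Matrix.of fun jl k => V (jl.1, k) jl.2

lemma ptraceRight_gram (V W : Matrix (m × n) p ℂ) :
    ptraceRight (V * Wᴴ) = reshR V * (reshR W)ᴴ := by
  ext j j'
  simp [ptraceRight, reshR, Matrix.mul_apply, Fintype.sum_prod_type]

lemma ptraceLeft_gram (V W : Matrix (m × n) p ℂ) :
    ptraceLeft (V * Wᴴ) = ((reshL W)ᴴ * reshL V)ᵀ := by
  ext k k'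
  simp only [ptraceLeft, Matrix.of_apply, Matrix.transpose_apply, Matrix.mul_apply,
    Matrix.conjTranspose_apply, reshL, Fintype.sum_prod_type]
  refine Finset.sum_congr rfl fun j _ => Finset.sum_congr rfl fun l _ => by ring

lemma ptraceRight_swap (V W : Matrix (m × n) p ℂ) :
    ptraceRight (V * Wᴴ) = ptraceRight (reshL V * (reshL W)ᴴ) := by
  ext j j'
  simp only [ptraceRight, Matrix.of_apply, Matrix.mul_apply, Matrix.conjTranspose_apply, reshL]
  exact Finset.sum_comm

lemma ptraceLeft_swap (V W : Matrix (m × n) p ℂ) :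
    ptraceLeft (V * Wᴴ) = (ptraceRight ((reshR W)ᴴ * reshR V))ᵀ := by
  ext k k'
  simp only [ptraceLeft, ptraceRight, Matrix.of_apply, Matrix.transpose_apply, Matrix.mul_apply,
    Matrix.conjTranspose_apply, reshR]
  rw [Finset.sum_comm]
  refine Finset.sum_congr rfl fun j _ => Finset.sum_congr rfl fun l _ => by ring

lemma trace_kron_one [DecidableEq n] (X : Matrix m m ℂ) (T : Matrix (m × n) (m × n) ℂ) :
    ((X ⊗ₖ (1 : Matrix n n ℂ)) * T).trace = (X * ptraceRight T).trace := by
  have lhs : ((X ⊗ₖ (1 : Matrix n n ℂ)) * T).trace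
      = ∑ j : m, ∑ k : n, ∑ j' : m, X j j' * T (j', k) (j, k) := by
    simp only [Matrix.trace, Matrix.diag, Matrix.mul_apply, kroneckerMap_apply,
      Matrix.one_apply, Fintype.sum_prod_type, mul_ite, mul_one, mul_zero, ite_mul, zero_mul,
      Finset.sum_ite_eq, Finset.sum_ite_eq', Finset.mem_univ, if_true]
  have rhs : (X * ptraceRight T).trace
      = ∑ j : m, ∑ j' : m, ∑ k : n, X j j' * T (j', k) (j, k) := by
    simp only [Matrix.trace, Matrix.diag, Matrix.mul_apply, ptraceRight, Matrix.of_apply,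
      Finset.mul_sum]
  rw [lhs, rhs]
  exact Finset.sum_congr rfl fun j _ => Finset.sum_comm

lemma trace_one_kron [DecidableEq m] (Y : Matrix n n ℂ) (T : Matrix (m × n) (m × n) ℂ) :
    (((1 : Matrix m m ℂ) ⊗ₖ Y) * T).trace = (Y * ptraceLeft T).trace := by
  have lhs : (((1 : Matrix m m ℂ) ⊗ₖ Y) * T).trace
      = ∑ j : m, ∑ k : n, ∑ k' : n, Y k k' * T (j, k') (j, k) := by
    simp only [Matrix.trace, Matrix.diag, Matrix.mul_apply, kroneckerMap_apply,
      Matrix.one_apply, Fintype.sum_prod_type, mul_ite, mul_one, mul_zero, ite_mul, zero_mul,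
      one_mul]
    refine Finset.sum_congr rfl fun j _ => Finset.sum_congr rfl fun k _ => ?_
    rw [Finset.sum_comm]
    simp [Finset.sum_ite_eq, Finset.sum_ite_eq']
  have rhs : (Y * ptraceLeft T).trace
      = ∑ k : n, ∑ k' : n, ∑ j : m, Y k k' * T (j, k') (j, k) := by
    simp only [Matrix.trace, Matrix.diag, Matrix.mul_apply, ptraceLeft, Matrix.of_apply,
      Finset.mul_sum]
  rw [lhs, rhs, Finset.sum_comm]
  exact Finset.sum_congr rfl fun k _ => Finset.sum_comm

end Reshape
/-- Impossibility of perfect distinguishability on both systems. -/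
theorem no_perfect_distinguishability_on_both
    {m n : Type*} [Fintype m] [Fintype n] [DecidableEq m] [DecidableEq n]
    (LS : Matrix m m ℂ) (hLS : LS.IsHermitian)
    (LA : Matrix n n ℂ) (hLA : LA.IsHermitian)
    (U : Matrix (m × n) (m × n) ℂ) (hU : Uᴴ * U = 1) (hU' : U * Uᴴ = 1)
    (hcomm : U * (LS ⊗ₖ (1 : Matrix n n ℂ) + (1 : Matrix m m ℂ) ⊗ₖ LA)
           = (LS ⊗ₖ (1 : Matrix n n ℂ) + (1 : Matrix m m ℂ) ⊗ₖ LA) * U)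
    (ψ0 ψ1 : m → ℂ) (hψ0 : star ψ0 ⬝ᵥ ψ0 = 1) (hψ1 : star ψ1 ⬝ᵥ ψ1 = 1)
    (horth : star ψ0 ⬝ᵥ ψ1 = 0)
    (hne : star ψ0 ⬝ᵥ (LS *ᵥ ψ1) ≠ 0)
    (σ : Matrix n n ℂ) (hσ : σ.PosSemidef) (hσt : σ.trace = 1)
    (ρ0 ρ1 : Matrix (m × n) (m × n) ℂ)
    (hρ0 : ρ0 = U * (vecMulVec ψ0 (star ψ0) ⊗ₖ σ) * Uᴴ)
    (hρ1 : ρ1 = U * (vecMulVec ψ1 (star ψ1) ⊗ₖ σ) * Uᴴ) :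
    ¬ (fidelity (ptraceRight ρ0) (ptraceRight ρ1) = 0 ∧
       fidelity (ptraceLeft ρ0) (ptraceLeft ρ1) = 0) := by
  rintro ⟨hFS, hFA⟩
  classical
  set s := hσ.sqrt with hsdef
  have hsH : sᴴ = s := hσ.posSemidef_sqrt.isHermitian.eq
  have hss : s * s = σ := hσ.sqrt_mul_self
  -- Gram factor of ψ ⊗ √σ
  have hEE : ∀ (φ χ : m → ℂ),
      (Matrix.of fun (jk : m × n) l => φ jk.1 * s jk.2 l) *
      (Matrix.of fun (jk : m × n) l => χ jk.1 * s jk.2 l)ᴴ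
        = vecMulVec φ (star χ) ⊗ₖ σ := by
    intro φ χ
    ext jk jk'
    have hσe : ∑ l, s jk.2 l * star (s jk'.2 l) = σ jk.2 jk'.2 := by
      calc ∑ l, s jk.2 l * star (s jk'.2 l)
          = ∑ l, s jk.2 l * s l jk'.2 := by
            refine Finset.sum_congr rfl fun l _ => ?_
            congr 1
            calc star (s jk'.2 l) = sᴴ l jk'.2 := rfl
              _ = s l jk'.2 := by rw [hsH]
        _ = (s * s) jk.2 jk'.2 := (Matrix.mul_apply).symm
        _ = σ jk.2 jk'.2 := by rw [hss]
    simp only [Matrix.mul_apply, Matrix.conjTranspose_apply, Matrix.of_apply,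
      kroneckerMap_apply, vecMulVec_apply, Pi.star_apply, star_mul']
    rw [← hσe, Finset.mul_sum]
    refine Finset.sum_congr rfl fun l _ => by ring
  set E0 : Matrix (m × n) n ℂ := Matrix.of fun jk l => ψ0 jk.1 * s jk.2 l with hE0
  set E1 : Matrix (m × n) n ℂ := Matrix.of fun jk l => ψ1 jk.1 * s jk.2 l with hE1
  set V0 : Matrix (m × n) n ℂ := U * E0 with hV0
  set V1 : Matrix (m × n) n ℂ := U * E1 with hV1
  have hρ0' : ρ0 = V0 * V0ᴴ := by
    rw [hρ0, ← hEE ψ0 ψ0, hV0, hE0]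
    simp only [Matrix.conjTranspose_mul, Matrix.mul_assoc]
  have hρ1' : ρ1 = V1 * V1ᴴ := by
    rw [hρ1, ← hEE ψ1 ψ1, hV1, hE1]
    simp only [Matrix.conjTranspose_mul, Matrix.mul_assoc]
  have hT : U * (vecMulVec ψ1 (star ψ0) ⊗ₖ σ) * Uᴴ = V1 * V0ᴴ := by
    rw [← hEE ψ1 ψ0, hV0, hV1, hE0, hE1]
    simp only [Matrix.conjTranspose_mul, Matrix.mul_assoc]
  -- S-side condition
  have hPS0 : (ptraceRight ρ0).PosSemidef := by
    rw [hρ0', ptraceRight_gram]; exact Matrix.posSemidef_self_mul_conjTranspose _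
  have hPS1 : (ptraceRight ρ1).PosSemidef := by
    rw [hρ1', ptraceRight_gram]; exact Matrix.posSemidef_self_mul_conjTranspose _
  have hprodS : ptraceRight ρ0 * ptraceRight ρ1 = 0 := aux_fid_zero hPS0 hPS1 hFS
  rw [hρ0', hρ1', ptraceRight_gram, ptraceRight_gram] at hprodS
  have hA01 : (reshR V0)ᴴ * reshR V1 = 0 :=
    (Matrix.mul_self_mul_conjTranspose_eq_zero _ _).mp
      ((Matrix.self_mul_conjTranspose_mul_eq_zero _ _).mp hprodS)
  have hTLeft : ptraceLeft (V1 * V0ᴴ) = 0 := by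
    rw [ptraceLeft_swap, hA01]
    ext k k'
    simp [ptraceRight]
  -- A-side condition
  have hPA0 : (ptraceLeft ρ0).PosSemidef := by
    rw [hρ0', ptraceLeft_gram]
    exact (Matrix.posSemidef_conjTranspose_mul_self _).transpose
  have hPA1 : (ptraceLeft ρ1).PosSemidef := by
    rw [hρ1', ptraceLeft_gram]
    exact (Matrix.posSemidef_conjTranspose_mul_self _).transpose
  have hprodA : ptraceLeft ρ0 * ptraceLeft ρ1 = 0 := aux_fid_zero hPA0 hPA1 hFA
  rw [hρ0', hρ1', ptraceLeft_gram, ptraceLeft_gram, ← Matrix.transpose_mul,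
    Matrix.transpose_eq_zero] at hprodA
  have hB10 : reshL V1 * (reshL V0)ᴴ = 0 :=
    (Matrix.mul_conjTranspose_mul_self_eq_zero _ _).mp
      ((Matrix.conjTranspose_mul_self_mul_eq_zero _ _).mp hprodA)
  have hTRight : ptraceRight (V1 * V0ᴴ) = 0 := by
    rw [ptraceRight_swap, hB10]
    ext j j'
    simp [ptraceRight]
  -- trace of M * T computed two ways
  set M : Matrix (m × n) (m × n) ℂ :=
    LS ⊗ₖ (1 : Matrix n n ℂ) + (1 : Matrix m m ℂ) ⊗ₖ LA with hM
  set X : Matrix (m × n) (m × n) ℂ := vecMulVec ψ1 (star ψ0) ⊗ₖ σ with hX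
  have key : (M * (U * X * Uᴴ)).trace = star ψ0 ⬝ᵥ (LS *ᵥ ψ1) := by
    have h1 : M * (U * X * Uᴴ) = U * (M * X * Uᴴ) := by
      calc M * (U * X * Uᴴ) = (M * U) * (X * Uᴴ) := by
            simp only [Matrix.mul_assoc]
        _ = (U * M) * (X * Uᴴ) := by rw [← hcomm]
        _ = U * (M * X * Uᴴ) := by simp only [Matrix.mul_assoc]
    rw [h1, Matrix.trace_mul_comm, Matrix.mul_assoc, Matrix.mul_assoc, hU, Matrix.mul_one]
    rw [hM, Matrix.add_mul, Matrix.trace_add, hX, ← Matrix.mul_kronecker_mul,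
      ← Matrix.mul_kronecker_mul, Matrix.trace_kronecker, Matrix.trace_kronecker]
    simp only [Matrix.one_mul]
    rw [hσt, mul_one]
    have htrP : (vecMulVec ψ1 (star ψ0)).trace = 0 := by
      rw [← horth]
      simp [Matrix.trace, Matrix.diag, vecMulVec_apply, dotProduct, mul_comm]
    rw [htrP, zero_mul, add_zero]
    simp only [Matrix.trace, Matrix.diag, Matrix.mul_apply, vecMulVec_apply, Pi.star_apply,
      dotProduct, Matrix.mulVec, Finset.mul_sum]
    refine Finset.sum_congr rfl fun j _ => Finset.sum_congr rfl fun i _ => by ring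
  have zero : (M * (U * X * Uᴴ)).trace = 0 := by
    rw [hX, hT, hM, Matrix.add_mul, Matrix.trace_add, trace_kron_one, trace_one_kron,
      hTRight, hTLeft, Matrix.mul_zero, Matrix.mul_zero, Matrix.trace_zero, Matrix.trace_zero,
      add_zero]
  exact hne (key.symm.trans zero)
end

section
/- (Ohira–Pearle example saturates the trade-off.) Let ℏ > 0, let {e_1, e_{-1}} be an orthonormal basis of ℂ², and let S_z := (ℏ/2)(|e_1⟩⟨e_1| − |e_{-1}⟩⟨e_{-1}|). Let α, β ∈ ℂ with |α|² + |β|² = 1, α ≠ 0, β ≠ 0, and set ψ1 := α e_1 + β e_{-1}, ψ0 := conj(β) e_1 − conj(α) e_{-1}, ψ1' := α e_1 + β e_{-1}, ψ0' := conj(β) e_1 + conj(α) e_{-1}. Then: (i) ⟨ψ0, S_z ψ1⟩ = ℏ α β; (ii) the fidelity of the pure states |ψ0'⟩⟨ψ0'| and |ψ1'⟩⟨ψ1'| equals 2|αβ|; (iii) the fidelity of the orthogonal pure apparatus states (e_1 + e_{-1})/√2 and (e_1 − e_{-1})/√2 is 0; and hence |⟨ψ0, S_z ψ1⟩| = ‖S_z‖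 · F(|ψ0'⟩⟨ψ0'|, |ψ1'⟩⟨ψ1'|), where ‖S_z‖ = ℏ/2 is the operator norm, i.e., equality holds in the distinguishability trade-off inequality with vanishing apparatus-side fidelity. -/
open Matrix Kronecker
open scoped ComplexOrder

lemma vmv_mulVec {n : Type*} [Fintype n] (a b x : n → ℂ) :
    vecMulVec a b *ᵥ x = (b ⬝ᵥ x) • a := by
  funext i
  simp [mulVec, vecMulVec_apply, dotProduct, Finset.sum_mul, Finset.mul_sum, mul_comm, mul_assoc, mul_left_comm]

lemma vmv_mul_vmv {n : Type*} [Fintype n] [DecidableEq n] (a b c d : n → ℂ) :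
    vecMulVec a b * vecMulVec c d = (b ⬝ᵥ c) • vecMulVec a d := by
  ext i j
  simp [Matrix.mul_apply, vecMulVec_apply, dotProduct, Finset.sum_mul, Finset.mul_sum,
    smul_eq_mul]
  congr 1; funext k; ring

lemma star_dot_comm {n : Type*} [Fintype n] (a b : n → ℂ) :
    star a ⬝ᵥ b = starRingEnd ℂ (star b ⬝ᵥ a) := by
  simp [dotProduct, map_sum, Pi.star_apply, mul_comm]

lemma vmv_posSemidef {n : Type*} [Fintype n] [DecidableEq n] (φ : n → ℂ) :
    (vecMulVec φ (star φ)).PosSemidef := by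
  exact posSemidef_vecMulVec_self_star φ

lemma trace_vmv {n : Type*} [Fintype n] (a b : n → ℂ) :
    (vecMulVec a b).trace = a ⬝ᵥ b := by
  simp [Matrix.trace, Matrix.diag, vecMulVec_apply, dotProduct]

lemma psd_smul {n : Type*} [Fintype n] [DecidableEq n] {P : Matrix n n ℂ}
    (hP : P.PosSemidef) {r : ℝ} (hr : 0 ≤ r) : ((r : ℂ) • P).PosSemidef := by
  exact hP.smul (Complex.zero_le_real.mpr hr)

open scoped MatrixOrder in
lemma psqrt_of_sq {n : Type*} [Fintype n] [DecidableEq n] {A B : Matrix n n ℂ}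
    (hB : B.PosSemidef) (h : B ^ 2 = A) : psqrt A = B := by
  have hA : A.PosSemidef := h ▸ hB.pow 2
  rw [psqrt, dif_pos hA]
  have e : (hA.1.eigenvectorUnitary : Matrix n n ℂ) * diagonal ((↑) ∘ Real.sqrt ∘ hA.1.eigenvalues) *
      (star hA.1.eigenvectorUnitary : Matrix n n ℂ) = cfc Real.sqrt A := by
    rw [hA.1.cfc_eq]
    simp [IsHermitian.cfc, Unitary.conjStarAlgAut_apply]
  have e2 : cfc Real.sqrt A = CFC.sqrt A := by
    rw [CFC.sqrt_eq_cfc, cfc_nnreal_eq_real _ A]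
    refine cfc_congr (fun x _ => ?_)
    rw [Real.coe_sqrt, Real.coe_toNNReal']
    rcases le_total 0 x with hx | hx
    · rw [max_eq_left hx]
    · rw [max_eq_right hx, Real.sqrt_zero, Real.sqrt_eq_zero'.mpr hx]
  rw [e, e2]
  exact CFC.sqrt_unique (by rw [← sq]; exact h) hB.nonneg

lemma fidelity_pure {n : Type*} [Fintype n] [DecidableEq n] (φ χ : n → ℂ)
    (hφ : star φ ⬝ᵥ φ = 1) (hχ : star χ ⬝ᵥ χ = 1) :
    fidelity (vecMulVec φ (star φ)) (vecMulVec χ (star χ)) = ‖star φ ⬝ᵥ χ‖ := by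
  set P := vecMulVec φ (star φ) with hPdef
  set c := star φ ⬝ᵥ χ with hcdef
  have hPsd := vmv_posSemidef φ
  have hPsq : P ^ 2 = P := by
    rw [sq, hPdef, vmv_mul_vmv, hφ, one_smul]
  have hsP : psqrt P = P := psqrt_of_sq hPsd hPsq
  have hmid : P * vecMulVec χ (star χ) * P = ((‖c‖ ^ 2 : ℝ) : ℂ) • P := by
    rw [hPdef, vmv_mul_vmv, Matrix.smul_mul, vmv_mul_vmv]
    rw [show star χ ⬝ᵥ φ = starRingEnd ℂ (star φ ⬝ᵥ χ) from star_dot_comm χ φ]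
    rw [smul_smul, ← hcdef, Complex.mul_conj']
    congr 1
    push_cast
    ring
  have hB : psqrt (P * vecMulVec χ (star χ) * P) = ((‖c‖ : ℝ) : ℂ) • P := by
    apply psqrt_of_sq (psd_smul hPsd (norm_nonneg c))
    rw [smul_pow, hPsq, hmid]
    norm_cast
  rw [fidelity, hsP, hB, Matrix.trace_smul, hPdef, trace_vmv, dotProduct_comm, hφ]
  simp


lemma norm_symm_eq (w : Fin 2 → ℂ) :
    ‖(WithLp.equiv 2 (Fin 2 → ℂ)).symm w‖ = Real.sqrt ((star w ⬝ᵥ w).re) := by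
  rw [EuclideanSpace.norm_eq]
  congr 1
  rw [dotProduct, Complex.re_sum]
  congr 1; funext i
  simp [Complex.normSq_apply, Complex.sq_norm, Complex.normSq_apply,
    Complex.mul_re]


lemma opNorm_Sz (ℏ : ℝ) (hℏ : 0 < ℏ)
    (e1 em1 : Fin 2 → ℂ)
    (he1 : star e1 ⬝ᵥ e1 = 1) (hem1 : star em1 ⬝ᵥ em1 = 1) (horthb : star e1 ⬝ᵥ em1 = 0)
    (Sz : Matrix (Fin 2) (Fin 2) ℂ)
    (hSz : Sz = ((ℏ : ℂ) / 2) • (vecMulVec e1 (star e1) - vecMulVec em1 (star em1))) :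
    opNorm Sz = ℏ / 2 := by
  have horthb' : star em1 ⬝ᵥ e1 = 0 := by rw [star_dot_comm, horthb]; simp
  have key : ∀ v : Fin 2 → ℂ, Sz *ᵥ v
      = ((ℏ:ℂ)/2) • ((star e1 ⬝ᵥ v) • e1 - (star em1 ⬝ᵥ v) • em1) := by
    intro v
    rw [hSz, smul_mulVec, sub_mulVec, vmv_mulVec, vmv_mulVec]
  have hT : ∀ x : EuclideanSpace ℂ (Fin 2),
      (LinearMap.toContinuousLinearMap (Matrix.toEuclideanLin Sz)) x
      = (WithLp.equiv 2 (Fin 2 → ℂ)).symm (Sz *ᵥ (WithLp.equiv 2 (Fin 2 → ℂ)) x) := by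
    intro x
    simp [Matrix.toEuclideanLin_apply]
  rw [opNorm]
  apply le_antisymm
  · apply ContinuousLinearMap.opNorm_le_bound _ (by positivity)
    intro x
    set v := (WithLp.equiv 2 (Fin 2 → ℂ)) x with hv
    set c1 := star e1 ⬝ᵥ v with hc1
    set c2 := star em1 ⬝ᵥ v with hc2
    have hc1' : star v ⬝ᵥ e1 = starRingEnd ℂ c1 := star_dot_comm v e1
    have hc2' : star v ⬝ᵥ em1 = starRingEnd ℂ c2 := star_dot_comm v em1
    have hyy : star (Sz *ᵥ v) ⬝ᵥ (Sz *ᵥ v)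
        = (((ℏ/2)^2 : ℝ) : ℂ) * (starRingEnd ℂ c1 * c1 + starRingEnd ℂ c2 * c2) := by
      rw [key]
      simp only [star_smul, star_sub, smul_dotProduct, dotProduct_smul, sub_dotProduct,
        dotProduct_sub, he1, hem1, horthb, horthb', hc1', hc2', ← hc1, ← hc2, star_smul]
      push_cast
      simp only [Complex.star_def, _root_.map_mul, _root_.map_one, map_div₀, map_ofNat,
        Complex.conj_ofReal, smul_eq_mul]
      ring
    have hbessel : (starRingEnd ℂ c1 * c1 + starRingEnd ℂ c2 * c2).re ≤ (star v ⬝ᵥ v).re := by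
      have h0 : 0 ≤ star (v - c1 • e1 - c2 • em1) ⬝ᵥ (v - c1 • e1 - c2 • em1) :=
        dotProduct_star_self_nonneg _
      have hexp : star (v - c1 • e1 - c2 • em1) ⬝ᵥ (v - c1 • e1 - c2 • em1)
          = star v ⬝ᵥ v - (starRingEnd ℂ c1 * c1 + starRingEnd ℂ c2 * c2) := by
        simp only [star_sub, star_smul, sub_dotProduct, dotProduct_sub, smul_dotProduct,
          dotProduct_smul, he1, hem1, horthb, horthb', hc1', hc2', ← hc1, ← hc2,
          Complex.star_def, smul_eq_mul]
        ring
      rw [hexp] at h0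
      have h1 := (Complex.le_def.mp h0).1
      simp only [Complex.zero_re, Complex.sub_re] at h1
      linarith
    have hq0 : 0 ≤ (starRingEnd ℂ c1 * c1 + starRingEnd ℂ c2 * c2).re := by
      simp only [Complex.add_re, Complex.mul_re, Complex.conj_re, Complex.conj_im]
      nlinarith [sq_nonneg c1.re, sq_nonneg c1.im, sq_nonneg c2.re, sq_nonneg c2.im]
    rw [hT, norm_symm_eq, hyy]
    have hxnorm : ‖x‖ = Real.sqrt ((star v ⬝ᵥ v).re) := by
      conv_lhs => rw [show x = (WithLp.equiv 2 (Fin 2 → ℂ)).symm v from rfl]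
      exact norm_symm_eq v
    rw [hxnorm, Complex.re_ofReal_mul]
    calc Real.sqrt ((ℏ/2)^2 * (starRingEnd ℂ c1 * c1 + starRingEnd ℂ c2 * c2).re)
        ≤ Real.sqrt ((ℏ/2)^2 * (star v ⬝ᵥ v).re) :=
          Real.sqrt_le_sqrt (mul_le_mul_of_nonneg_left hbessel (sq_nonneg _))
      _ = ℏ/2 * Real.sqrt ((star v ⬝ᵥ v).re) := by
          rw [Real.sqrt_mul (sq_nonneg _), Real.sqrt_sq (by positivity)]
  · set es : EuclideanSpace ℂ (Fin 2) := (WithLp.equiv 2 (Fin 2 → ℂ)).symm e1 with hes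
    have h1 : ‖es‖ = 1 := by rw [hes, norm_symm_eq, he1]; simp
    have h2 : Sz *ᵥ e1 = ((ℏ:ℂ)/2) • e1 := by
      rw [key, he1, horthb']
      simp
    have h3 : ‖(LinearMap.toContinuousLinearMap (Matrix.toEuclideanLin Sz)) es‖ = ℏ/2 := by
      rw [hT, hes, Equiv.apply_symm_apply, h2, norm_symm_eq]
      simp only [star_smul, smul_dotProduct, dotProduct_smul, he1, smul_eq_mul, mul_one,
        Complex.star_def, map_div₀, Complex.conj_ofReal, map_ofNat]
      rw [show (↑ℏ/2 : ℂ) * (↑ℏ/2) = (((ℏ/2)^2 : ℝ) : ℂ) by push_cast; ring]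
      rw [Complex.ofReal_re, Real.sqrt_sq (by positivity)]
    calc ℏ/2 = ‖(LinearMap.toContinuousLinearMap (Matrix.toEuclideanLin Sz)) es‖ := h3.symm
      _ ≤ ‖LinearMap.toContinuousLinearMap (Matrix.toEuclideanLin Sz)‖ * ‖es‖ :=
          ContinuousLinearMap.le_opNorm _ _
      _ = _ := by rw [h1, mul_one]

lemma conj_mul_self_eq (z : ℂ) : starRingEnd ℂ z * z = ((‖z‖ ^ 2 : ℝ) : ℂ) := by
  rw [mul_comm, Complex.mul_conj']
  simp

/-- The Ohira–Pearle example saturates the distinguishability trade-off. -/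
theorem ohira_pearle_saturates_tradeoff
    (ℏ : ℝ) (hℏ : 0 < ℏ)
    (e1 em1 : Fin 2 → ℂ)
    (he1 : star e1 ⬝ᵥ e1 = 1) (hem1 : star em1 ⬝ᵥ em1 = 1) (horthb : star e1 ⬝ᵥ em1 = 0)
    (Sz : Matrix (Fin 2) (Fin 2) ℂ)
    (hSz : Sz = ((ℏ : ℂ) / 2) • (vecMulVec e1 (star e1) - vecMulVec em1 (star em1)))
    (α β : ℂ) (hnorm : ‖α‖ ^ 2 + ‖β‖ ^ 2 = 1)
    (hα : α ≠ 0) (hβ : β ≠ 0)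
    (ψ1 ψ0 ψ1' ψ0' : Fin 2 → ℂ)
    (hψ1 : ψ1 = α • e1 + β • em1)
    (hψ0 : ψ0 = (starRingEnd ℂ β) • e1 - (starRingEnd ℂ α) • em1)
    (hψ1' : ψ1' = α • e1 + β • em1)
    (hψ0' : ψ0' = (starRingEnd ℂ β) • e1 + (starRingEnd ℂ α) • em1)
    (a0 a1 : Fin 2 → ℂ)
    (ha0 : a0 = ((1 / Real.sqrt 2 : ℝ) : ℂ) • (e1 + em1))
    (ha1 : a1 = ((1 / Real.sqrt 2 : ℝ) : ℂ) • (e1 - em1)) :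
    star ψ0 ⬝ᵥ (Sz *ᵥ ψ1) = (ℏ : ℂ) * α * β ∧
    fidelity (vecMulVec ψ0' (star ψ0')) (vecMulVec ψ1' (star ψ1'))
      = 2 * ‖α * β‖ ∧
    fidelity (vecMulVec a0 (star a0)) (vecMulVec a1 (star a1)) = 0 ∧
    opNorm Sz = ℏ / 2 ∧
    ‖star ψ0 ⬝ᵥ (Sz *ᵥ ψ1)‖
      = opNorm Sz * fidelity (vecMulVec ψ0' (star ψ0')) (vecMulVec ψ1' (star ψ1')) := by
  have horthb' : star em1 ⬝ᵥ e1 = 0 := by rw [star_dot_comm, horthb]; simp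
  have key : ∀ v : Fin 2 → ℂ, Sz *ᵥ v
      = ((ℏ:ℂ)/2) • ((star e1 ⬝ᵥ v) • e1 - (star em1 ⬝ᵥ v) • em1) := by
    intro v
    rw [hSz, smul_mulVec, sub_mulVec, vmv_mulVec, vmv_mulVec]
  have hC : ((‖α‖ ^ 2 : ℝ) : ℂ) + ((‖β‖ ^ 2 : ℝ) : ℂ) = 1 := by
    push_cast
    exact_mod_cast hnorm
  -- part (i)
  have part1 : star ψ0 ⬝ᵥ (Sz *ᵥ ψ1) = (ℏ : ℂ) * α * β := by
    have hd1 : star e1 ⬝ᵥ ψ1 = α := by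
      simp [hψ1, dotProduct_add, dotProduct_smul, he1, horthb]
    have hd2 : star em1 ⬝ᵥ ψ1 = β := by
      simp [hψ1, dotProduct_add, dotProduct_smul, hem1, horthb']
    have hd3 : star ψ0 ⬝ᵥ e1 = β := by
      rw [star_dot_comm]
      simp [hψ0, dotProduct_sub, dotProduct_smul, he1, horthb]
    have hd4 : star ψ0 ⬝ᵥ em1 = -α := by
      rw [star_dot_comm]
      simp [hψ0, dotProduct_sub, dotProduct_smul, hem1, horthb']
    rw [key, hd1, hd2, dotProduct_smul, dotProduct_sub, dotProduct_smul, dotProduct_smul,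
      hd3, hd4]
    simp only [smul_eq_mul]
    ring
  -- unit vectors
  have hu1 : star ψ1' ⬝ᵥ ψ1' = 1 := by
    simp only [hψ1', star_add, star_smul, add_dotProduct, dotProduct_add, smul_dotProduct,
      dotProduct_smul, he1, hem1, horthb, horthb', smul_eq_mul, Complex.star_def,
      mul_zero, mul_one, zero_add, add_zero]
    linear_combination conj_mul_self_eq α + conj_mul_self_eq β + hC
  have hu0 : star ψ0' ⬝ᵥ ψ0' = 1 := by
    simp only [hψ0', star_add, star_smul, add_dotProduct, dotProduct_add, smul_dotProduct,
      dotProduct_smul, he1, hem1, horthb, horthb', smul_eq_mul, Complex.star_def,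
      Complex.conj_conj, mul_zero, mul_one, zero_add, add_zero]
    linear_combination conj_mul_self_eq α + conj_mul_self_eq β + hC
  have hdot01 : star ψ0' ⬝ᵥ ψ1' = 2 * (α * β) := by
    simp only [hψ0', hψ1', star_add, star_smul, add_dotProduct, dotProduct_add,
      smul_dotProduct, dotProduct_smul, he1, hem1, horthb, horthb', smul_eq_mul,
      Complex.star_def, Complex.conj_conj, mul_zero, mul_one, zero_add, add_zero]
    ring
  have part2 : fidelity (vecMulVec ψ0' (star ψ0')) (vecMulVec ψ1' (star ψ1'))
      = 2 * ‖α * β‖ := by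
    rw [fidelity_pure ψ0' ψ1' hu0 hu1, hdot01]
    simp [Complex.norm_def]
  have ha0u : star a0 ⬝ᵥ a0 = 1 := by
    simp only [ha0, star_add, star_smul, add_dotProduct, dotProduct_add, smul_dotProduct,
      dotProduct_smul, he1, hem1, horthb, horthb', smul_eq_mul, Complex.star_def,
      Complex.conj_ofReal, mul_zero, mul_one, zero_add, add_zero]
    have hs : ((1/Real.sqrt 2 : ℝ):ℂ) * ((1/Real.sqrt 2 : ℝ):ℂ) = 1/2 := by
      rw [← Complex.ofReal_mul, div_mul_div_comm, one_mul,
        Real.mul_self_sqrt (by norm_num : (0:ℝ) ≤ 2)]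
      norm_num
    linear_combination 2*hs
  have ha1u : star a1 ⬝ᵥ a1 = 1 := by
    simp only [ha1, star_sub, star_smul, sub_dotProduct, dotProduct_sub, smul_dotProduct,
      dotProduct_smul, he1, hem1, horthb, horthb', smul_eq_mul, Complex.star_def,
      Complex.conj_ofReal, mul_zero, mul_one, zero_sub, sub_zero, sub_neg_eq_add]
    have hs : ((1/Real.sqrt 2 : ℝ):ℂ) * ((1/Real.sqrt 2 : ℝ):ℂ) = 1/2 := by
      rw [← Complex.ofReal_mul, div_mul_div_comm, one_mul,
        Real.mul_self_sqrt (by norm_num : (0:ℝ) ≤ 2)]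
      norm_num
    linear_combination 2*hs
  have ha01 : star a0 ⬝ᵥ a1 = 0 := by
    simp only [ha0, ha1, star_add, star_smul, sub_dotProduct, dotProduct_sub, add_dotProduct,
      dotProduct_add, smul_dotProduct, dotProduct_smul, he1, hem1, horthb, horthb',
      smul_eq_mul, Complex.star_def, Complex.conj_ofReal, mul_zero, mul_one]
    ring
  have part3 : fidelity (vecMulVec a0 (star a0)) (vecMulVec a1 (star a1)) = 0 := by
    rw [fidelity_pure a0 a1 ha0u ha1u, ha01]
    simp
  have part4 : opNorm Sz = ℏ / 2 := opNorm_Sz ℏ hℏ e1 em1 he1 hem1 horthb Sz hSz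
  refine ⟨part1, part2, part3, part4, ?_⟩
  rw [part1, part2, part4]
  rw [show (ℏ:ℂ) * α * β = (ℏ:ℂ) * (α * β) by ring]
  rw [norm_mul, Complex.norm_real, Real.norm_of_nonneg hℏ.le]
  ring
end
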